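/- Hennessy–Milner theorem for restorative modal logics on image-finite models: let Λ be a restorative similarity type and M an image-finite Kripke model. Then for all worlds w, v of M: every Λ-language formula true at w is true at v if and only if there exists a Λ-simulation S on M with S w v. -/

import Mathlib

inductive Op : Type
  | smile
  | frown
  | cons
  | det
  | incons
  | undet
  deriving DecidableEq

inductive Fm (K : Type) : Type
  | prop (k : K)
  | top
  | bot
  | and (a b : Fm K)
  | or (a b : Fm K)
  | smile (a : Fm K)
  | frown (a : Fm K)
  | cons (a : Fm K)
  | det (a : Fm K)
  | incons (a : Fm K)
  | undet (a : Fm K)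

def Sat {W K : Type} (R : W → W → Prop) (P : K → W → Prop) : W → Fm K → Prop
  | w, .prop k => P k w
  | _, .top => True
  | _, .bot => False
  | w, .and a b => Sat R P w a ∧ Sat R P w b
  | w, .or a b => Sat R P w a ∨ Sat R P w b
  | w, .smile a => ∃ v, R w v ∧ ¬ Sat R P v a
  | w, .frown a => ∀ v, R w v → ¬ Sat R P v a
  | w, .cons a => ¬ Sat R P w a ∨ ∀ v, R w v → Sat R P v a
  | w, .det a => Sat R P w a ∨ ∀ v, R w v → ¬ Sat R P v a
  | w, .incons a => Sat R P w a ∧ ∃ v, R w v ∧ ¬ Sat R P v a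
  | w, .undet a => ¬ Sat R P w a ∧ ∃ v, R w v ∧ Sat R P v a

/-- `InLang Λ φ` says that `φ` uses only modal operators from `Λ`. -/
def InLang {K : Type} (Λ : Set Op) : Fm K → Prop
  | .prop _ => True
  | .top => True
  | .bot => True
  | .and a b => InLang Λ a ∧ InLang Λ b
  | .or a b => InLang Λ a ∧ InLang Λ b
  | .smile a => Op.smile ∈ Λ ∧ InLang Λ a
  | .frown a => Op.frown ∈ Λ ∧ InLang Λ a
  | .cons a => Op.cons ∈ Λ ∧ InLang Λ a
  | .det a => Op.det ∈ Λ ∧ InLang Λ a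
  | .incons a => Op.incons ∈ Λ ∧ InLang Λ a
  | .undet a => Op.undet ∈ Λ ∧ InLang Λ a

/-- The simulation conditions, parametric in the similarity type `Λ`. -/
def SimConds {K Wi Wj : Type} (Λ : Set Op)
    (Ri : Wi → Wi → Prop) (Rj : Wj → Wj → Prop)
    (Pi : K → Wi → Prop) (Pj : K → Wj → Prop)
    (Sij : Wi → Wj → Prop) (Sji : Wj → Wi → Prop)
    (Sii : Wi → Wi → Prop) (Sjj : Wj → Wj → Prop) : Prop :=
  (∀ k w v, Sij w v → Pi k w → Pj k v) ∧
  (Op.smile ∈ Λ → ∀ w v s, Sij w v → Ri w s → ∃ t, Rj v t ∧ Sji t s) ∧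
  (Op.frown ∈ Λ → ∀ w v t, Sij w v → Rj v t → ∃ s, Ri w s ∧ Sji t s) ∧
  (Op.cons ∈ Λ → ∀ w v t, Sij w v → Rj v t →
      (Sjj v t ∨ (Sji v w ∧ ∃ s, Ri w s ∧ Sij s t))) ∧
  (Op.det ∈ Λ → ∀ w v t, Sij w v → Rj v t →
      (Sjj t v ∨ ∃ s, Ri w s ∧ Sji t s)) ∧
  (Op.incons ∈ Λ → ∀ w v s, Sij w v → Ri w s →
      (Sii w s ∨ ∃ t, Rj v t ∧ Sji t s)) ∧
  (Op.undet ∈ Λ → ∀ w v s, Sij w v → Ri w s →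
      (Sii s w ∨ (Sji v w ∧ ∃ t, Rj v t ∧ Sij s t)))

/-- A `Λ`-simulation on a single Kripke model. -/
def IsSim {K W : Type} (Λ : Set Op) (R : W → W → Prop) (P : K → W → Prop)
    (S : W → W → Prop) : Prop :=
  SimConds Λ R R P P S S S S


namespace HMaux

def bigOr {K : Type} : List (Fm K) → Fm K
  | [] => .bot
  | φ :: l => .or φ (bigOr l)

def bigAnd {K : Type} : List (Fm K) → Fm K
  | [] => .top
  | φ :: l => .and φ (bigAnd l)

lemma sat_bigOr {W K : Type} (R : W → W → Prop) (P : K → W → Prop) (w : W)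
    (l : List (Fm K)) : Sat R P w (bigOr l) ↔ ∃ φ ∈ l, Sat R P w φ := by
  induction l with
  | nil => simp [bigOr, Sat]
  | cons a l ih => simp [bigOr, Sat, ih]

lemma sat_bigAnd {W K : Type} (R : W → W → Prop) (P : K → W → Prop) (w : W)
    (l : List (Fm K)) : Sat R P w (bigAnd l) ↔ ∀ φ ∈ l, Sat R P w φ := by
  induction l with
  | nil => simp [bigAnd, Sat]
  | cons a l ih => simp [bigAnd, Sat, ih]

lemma inLang_bigOr {K : Type} (Λ : Set Op) (l : List (Fm K))
    (h : ∀ φ ∈ l, InLang Λ φ) : InLang Λ (bigOr l) := by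
  induction l with
  | nil => trivial
  | cons a l ih =>
      exact ⟨h a List.mem_cons_self, ih fun φ hφ => h φ (List.mem_cons_of_mem a hφ)⟩

lemma inLang_bigAnd {K : Type} (Λ : Set Op) (l : List (Fm K))
    (h : ∀ φ ∈ l, InLang Λ φ) : InLang Λ (bigAnd l) := by
  induction l with
  | nil => trivial
  | cons a l ih =>
      exact ⟨h a List.mem_cons_self, ih fun φ hφ => h φ (List.mem_cons_of_mem a hφ)⟩

lemma finset_choice {α β : Type} (s : Finset α) (Q : α → β → Prop) :
    (∀ t ∈ s, ∃ φ, Q t φ) →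
    ∃ l : List β, (∀ b ∈ l, ∃ t ∈ s, Q t b) ∧ ∀ t ∈ s, ∃ b ∈ l, Q t b := by
  classical
  induction s using Finset.induction_on with
  | empty => exact fun _ => ⟨[], by simp, by simp⟩
  | @insert a s ha ih =>
      intro h
      obtain ⟨b, hb⟩ := h a (Finset.mem_insert_self a s)
      obtain ⟨l, hl1, hl2⟩ := ih fun t ht => h t (Finset.mem_insert_of_mem ht)
      refine ⟨b :: l, ?_, ?_⟩
      · intro c hc
        rcases List.mem_cons.1 hc with rfl | hc
        · exact ⟨a, Finset.mem_insert_self a s, hb⟩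
        · obtain ⟨t, ht, hq⟩ := hl1 c hc
          exact ⟨t, Finset.mem_insert_of_mem ht, hq⟩
      · intro t ht
        rcases Finset.mem_insert.1 ht with rfl | ht
        · exact ⟨b, List.mem_cons_self, hb⟩
        · obtain ⟨c, hc, hq⟩ := hl2 t ht
          exact ⟨c, List.mem_cons_of_mem b hc, hq⟩

lemma sim_pres {W K : Type} {Λ : Set Op} {R : W → W → Prop} {P : K → W → Prop}
    {S : W → W → Prop} (hS : IsSim Λ R P S) :
    ∀ φ : Fm K, InLang Λ φ → ∀ w v, S w v → Sat R P w φ → Sat R P v φ := by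
  obtain ⟨hP, hsm, hfr, hco, hde, hin, hun⟩ := hS
  intro φ
  induction φ with
  | prop k => intro _ w v hwv h; exact hP k w v hwv h
  | top => intro _ w v _ _; trivial
  | bot => intro _ w v _ h; exact h.elim
  | and a b iha ihb =>
      rintro ⟨ha, hb⟩ w v hwv ⟨h1, h2⟩
      exact ⟨iha ha w v hwv h1, ihb hb w v hwv h2⟩
  | or a b iha ihb =>
      rintro ⟨ha, hb⟩ w v hwv (h | h)
      · exact Or.inl (iha ha w v hwv h)
      · exact Or.inr (ihb hb w v hwv h)
  | smile a ih =>
      rintro ⟨hmem, ha⟩ w v hwv ⟨s, hws, hs⟩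
      obtain ⟨t, hvt, hts⟩ := hsm hmem w v s hwv hws
      exact ⟨t, hvt, fun h => hs (ih ha t s hts h)⟩
  | frown a ih =>
      rintro ⟨hmem, ha⟩ w v hwv h t hvt
      obtain ⟨s, hws, hts⟩ := hfr hmem w v t hwv hvt
      exact fun ht => h s hws (ih ha t s hts ht)
  | cons a ih =>
      rintro ⟨hmem, ha⟩ w v hwv h
      by_cases hva : Sat R P v a
      · right
        intro t hvt
        rcases hco hmem w v t hwv hvt with hvt' | ⟨hvw, s, hws, hst⟩
        · exact ih ha v t hvt' hva
        · rcases h with h | h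
          · exact absurd (ih ha v w hvw hva) h
          · exact ih ha s t hst (h s hws)
      · exact Or.inl hva
  | det a ih =>
      rintro ⟨hmem, ha⟩ w v hwv h
      by_cases hva : Sat R P v a
      · exact Or.inl hva
      · right
        intro t hvt hta
        rcases hde hmem w v t hwv hvt with htv | ⟨s, hws, hts⟩
        · exact hva (ih ha t v htv hta)
        · rcases h with h | h
          · exact hva (ih ha w v hwv h)
          · exact h s hws (ih ha t s hts hta)
  | incons a ih =>
      rintro ⟨hmem, ha⟩ w v hwv ⟨hwa, s, hws, hs⟩
      refine ⟨ih ha w v hwv hwa, ?_⟩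
      rcases hin hmem w v s hwv hws with hws' | ⟨t, hvt, hts⟩
      · exact absurd (ih ha w s hws' hwa) hs
      · exact ⟨t, hvt, fun h => hs (ih ha t s hts h)⟩
  | undet a ih =>
      rintro ⟨hmem, ha⟩ w v hwv ⟨hwa, s, hws, hs⟩
      rcases hun hmem w v s hwv hws with hsw | ⟨hvw, t, hvt, hst⟩
      · exact absurd (ih ha s w hsw hs) hwa
      · exact ⟨fun h => hwa (ih ha v w hvw h), t, hvt, ih ha s t hst hs⟩

/-- The logical preservation relation. -/
def Pres {W K : Type} (Λ : Set Op) (R : W → W → Prop) (P : K → W → Prop)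
    (w v : W) : Prop :=
  ∀ φ : Fm K, InLang Λ φ → Sat R P w φ → Sat R P v φ

lemma pres_isSim {W K : Type} (Λ : Set Op) (R : W → W → Prop) (P : K → W → Prop)
    (hfin : ∀ w : W, {v | R w v}.Finite) :
    IsSim Λ R P (Pres Λ R P) := by
  classical
  refine ⟨?_, ?_, ?_, ?_, ?_, ?_, ?_⟩
  · -- prop
    intro k w v h hk
    exact h (.prop k) trivial hk
  · -- smile
    intro hmem w v s hwv hws
    by_contra hcon
    push_neg at hcon
    have hch : ∀ t ∈ (hfin v).toFinset, ∃ φ : Fm K,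
        InLang Λ φ ∧ Sat R P t φ ∧ ¬ Sat R P s φ := by
      intro t ht
      have hvt : R v t := ((hfin v).mem_toFinset).1 ht
      have := hcon t hvt
      simp only [Pres, not_forall] at this
      obtain ⟨φ, hφ, hsat, hns⟩ := this
      exact ⟨φ, hφ, hsat, hns⟩
    obtain ⟨l, hl1, hl2⟩ := finset_choice _ _ hch
    have hψ : InLang Λ (Fm.smile (bigOr l)) :=
      ⟨hmem, inLang_bigOr Λ l fun φ hφ => (hl1 φ hφ).choose_spec.2.1⟩
    have hsw : Sat R P w (Fm.smile (bigOr l)) := by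
      refine ⟨s, hws, ?_⟩
      rw [sat_bigOr]
      rintro ⟨φ, hφ, hsφ⟩
      obtain ⟨t, ht, _, _, hns⟩ := hl1 φ hφ
      exact hns hsφ
    obtain ⟨t, hvt, hnt⟩ := hwv _ hψ hsw
    obtain ⟨φ, hφl, _, hsatt, _⟩ := hl2 t (((hfin v).mem_toFinset).2 hvt)
    exact hnt ((sat_bigOr R P t l).2 ⟨φ, hφl, hsatt⟩)
  · -- frown
    intro hmem w v t hwv hvt
    by_contra hcon
    push_neg at hcon
    have hch : ∀ s ∈ (hfin w).toFinset, ∃ φ : Fm K,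
        InLang Λ φ ∧ Sat R P t φ ∧ ¬ Sat R P s φ := by
      intro s hs
      have hws : R w s := ((hfin w).mem_toFinset).1 hs
      have := hcon s hws
      simp only [Pres, not_forall] at this
      obtain ⟨φ, hφ, hsat, hns⟩ := this
      exact ⟨φ, hφ, hsat, hns⟩
    obtain ⟨l, hl1, hl2⟩ := finset_choice _ _ hch
    have hψ : InLang Λ (Fm.frown (bigAnd l)) :=
      ⟨hmem, inLang_bigAnd Λ l fun φ hφ => (hl1 φ hφ).choose_spec.2.1⟩
    have hsw : Sat R P w (Fm.frown (bigAnd l)) := by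
      intro s hws hsψ
      obtain ⟨φ, hφl, _, _, hns⟩ := hl2 s (((hfin w).mem_toFinset).2 hws)
      exact hns ((sat_bigAnd R P s l).1 hsψ φ hφl)
    refine hwv _ hψ hsw t hvt ?_
    rw [sat_bigAnd]
    intro φ hφ
    exact (hl1 φ hφ).choose_spec.2.2.1
  · -- cons
    intro hmem w v t hwv hvt
    by_cases hvt' : Pres Λ R P v t
    · exact Or.inl hvt'
    right
    simp only [Pres, not_forall] at hvt'
    obtain ⟨α, hα, hvα, htα⟩ := hvt'
    constructor
    · -- Pres v w
      intro β hβ hvβ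
      by_contra hwβ
      have hγ : InLang Λ (Fm.cons (Fm.and α β)) := ⟨hmem, hα, hβ⟩
      have hsw : Sat R P w (Fm.cons (Fm.and α β)) :=
        Or.inl fun h => hwβ h.2
      rcases hwv _ hγ hsw with h | h
      · exact h ⟨hvα, hvβ⟩
      · exact htα (h t hvt).1
    · -- ∃ s, R w s ∧ Pres s t
      by_contra hcon
      push_neg at hcon
      have hch : ∀ s ∈ (hfin w).toFinset, ∃ φ : Fm K,
          InLang Λ φ ∧ Sat R P s φ ∧ ¬ Sat R P t φ := by
        intro s hs
        have hws : R w s := ((hfin w).mem_toFinset).1 hs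
        have := hcon s hws
        simp only [Pres, not_forall] at this
        obtain ⟨φ, hφ, hsat, hns⟩ := this
        exact ⟨φ, hφ, hsat, hns⟩
      obtain ⟨l, hl1, hl2⟩ := finset_choice _ _ hch
      have hγ : InLang Λ (Fm.cons (Fm.or α (bigOr l))) :=
        ⟨hmem, hα, inLang_bigOr Λ l fun φ hφ => (hl1 φ hφ).choose_spec.2.1⟩
      have hsw : Sat R P w (Fm.cons (Fm.or α (bigOr l))) := by
        right
        intro s hws
        obtain ⟨φ, hφl, _, hsφ, _⟩ := hl2 s (((hfin w).mem_toFinset).2 hws)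
        exact Or.inr ((sat_bigOr R P s l).2 ⟨φ, hφl, hsφ⟩)
      rcases hwv _ hγ hsw with h | h
      · exact h (Or.inl hvα)
      · rcases h t hvt with h' | h'
        · exact htα h'
        · obtain ⟨φ, hφ, hsφ⟩ := (sat_bigOr R P t l).1 h'
          obtain ⟨s, hs, _, _, hns⟩ := hl1 φ hφ
          exact hns hsφ
  · -- det
    intro hmem w v t hwv hvt
    by_cases htv : Pres Λ R P t v
    · exact Or.inl htv
    right
    simp only [Pres, not_forall] at htv
    obtain ⟨α, hα, htα, hvα⟩ := htv
    by_contra hcon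
    push_neg at hcon
    have hch : ∀ s ∈ (hfin w).toFinset, ∃ φ : Fm K,
        InLang Λ φ ∧ Sat R P t φ ∧ ¬ Sat R P s φ := by
      intro s hs
      have hws : R w s := ((hfin w).mem_toFinset).1 hs
      have := hcon s hws
      simp only [Pres, not_forall] at this
      obtain ⟨φ, hφ, hsat, hns⟩ := this
      exact ⟨φ, hφ, hsat, hns⟩
    obtain ⟨l, hl1, hl2⟩ := finset_choice _ _ hch
    have hγ : InLang Λ (Fm.det (Fm.and α (bigAnd l))) :=
      ⟨hmem, hα, inLang_bigAnd Λ l fun φ hφ => (hl1 φ hφ).choose_spec.2.1⟩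
    have hsw : Sat R P w (Fm.det (Fm.and α (bigAnd l))) := by
      right
      intro s hws hsγ
      obtain ⟨φ, hφl, _, _, hns⟩ := hl2 s (((hfin w).mem_toFinset).2 hws)
      exact hns ((sat_bigAnd R P s l).1 hsγ.2 φ hφl)
    rcases hwv _ hγ hsw with h | h
    · exact hvα h.1
    · refine h t hvt ⟨htα, ?_⟩
      rw [sat_bigAnd]
      intro φ hφ
      exact (hl1 φ hφ).choose_spec.2.2.1
  · -- incons
    intro hmem w v s hwv hws
    by_cases hws' : Pres Λ R P w s
    · exact Or.inl hws'
    right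
    simp only [Pres, not_forall] at hws'
    obtain ⟨α, hα, hwα, hsα⟩ := hws'
    by_contra hcon
    push_neg at hcon
    have hch : ∀ t ∈ (hfin v).toFinset, ∃ φ : Fm K,
        InLang Λ φ ∧ Sat R P t φ ∧ ¬ Sat R P s φ := by
      intro t ht
      have hvt : R v t := ((hfin v).mem_toFinset).1 ht
      have := hcon t hvt
      simp only [Pres, not_forall] at this
      obtain ⟨φ, hφ, hsat, hns⟩ := this
      exact ⟨φ, hφ, hsat, hns⟩
    obtain ⟨l, hl1, hl2⟩ := finset_choice _ _ hch
    have hγ : InLang Λ (Fm.incons (Fm.or α (bigOr l))) :=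
      ⟨hmem, hα, inLang_bigOr Λ l fun φ hφ => (hl1 φ hφ).choose_spec.2.1⟩
    have hsw : Sat R P w (Fm.incons (Fm.or α (bigOr l))) := by
      refine ⟨Or.inl hwα, s, hws, ?_⟩
      rintro (h | h)
      · exact hsα h
      · obtain ⟨φ, hφ, hsφ⟩ := (sat_bigOr R P s l).1 h
        obtain ⟨t, ht, _, _, hns⟩ := hl1 φ hφ
        exact hns hsφ
    obtain ⟨_, t, hvt, hnt⟩ := hwv _ hγ hsw
    obtain ⟨φ, hφl, _, hsatt, _⟩ := hl2 t (((hfin v).mem_toFinset).2 hvt)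
    exact hnt (Or.inr ((sat_bigOr R P t l).2 ⟨φ, hφl, hsatt⟩))
  · -- undet
    intro hmem w v s hwv hws
    by_cases hsw' : Pres Λ R P s w
    · exact Or.inl hsw'
    right
    simp only [Pres, not_forall] at hsw'
    obtain ⟨α, hα, hsα, hwα⟩ := hsw'
    constructor
    · -- Pres v w
      intro β hβ hvβ
      by_contra hwβ
      have hγ : InLang Λ (Fm.undet (Fm.or α β)) := ⟨hmem, hα, hβ⟩
      have hsw : Sat R P w (Fm.undet (Fm.or α β)) := by
        refine ⟨?_, s, hws, Or.inl hsα⟩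
        rintro (h | h)
        · exact hwα h
        · exact hwβ h
      obtain ⟨hnv, _⟩ := hwv _ hγ hsw
      exact hnv (Or.inr hvβ)
    · -- ∃ t, R v t ∧ Pres s t
      by_contra hcon
      push_neg at hcon
      have hch : ∀ t ∈ (hfin v).toFinset, ∃ φ : Fm K,
          InLang Λ φ ∧ Sat R P s φ ∧ ¬ Sat R P t φ := by
        intro t ht
        have hvt : R v t := ((hfin v).mem_toFinset).1 ht
        have := hcon t hvt
        simp only [Pres, not_forall] at this
        obtain ⟨φ, hφ, hsat, hns⟩ := this
        exact ⟨φ, hφ, hsat, hns⟩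
      obtain ⟨l, hl1, hl2⟩ := finset_choice _ _ hch
      have hγ : InLang Λ (Fm.undet (Fm.and α (bigAnd l))) :=
        ⟨hmem, hα, inLang_bigAnd Λ l fun φ hφ => (hl1 φ hφ).choose_spec.2.1⟩
      have hsatw : Sat R P w (Fm.undet (Fm.and α (bigAnd l))) := by
        refine ⟨fun h => hwα h.1, s, hws, hsα, ?_⟩
        rw [sat_bigAnd]
        intro φ hφ
        exact (hl1 φ hφ).choose_spec.2.2.1
      obtain ⟨_, t, hvt, htγ⟩ := hwv _ hγ hsatw
      obtain ⟨φ, hφl, _, _, hns⟩ := hl2 t (((hfin v).mem_toFinset).2 hvt)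
      exact hns ((sat_bigAnd R P t l).1 htγ.2 φ hφl)

end HMaux

theorem stmt16 {W K : Type} (Λ : Set Op)
    (R : W → W → Prop) (P : K → W → Prop)
    (hfin : ∀ w : W, {v | R w v}.Finite) :
    ∀ w v : W,
      (∀ φ : Fm K, InLang Λ φ → Sat R P w φ → Sat R P v φ) ↔
      (∃ S : W → W → Prop, IsSim Λ R P S ∧ S w v) := by
  intro w v
  constructor
  · intro h
    exact ⟨HMaux.Pres Λ R P, HMaux.pres_isSim Λ R P hfin, h⟩
  · rintro ⟨S, hS, hSwv⟩
    intro φ hφ hw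
    exact HMaux.sim_pres hS φ hφ w v hSwv hw
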